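/- Box-index bound for the diagonal tableau: let n ∈ ℕ and 1 ≤ k ≤ n−2, and let λ = (n−k,⋆). Then every cell (i,j) of λ satisfies j − i + 1 ≤ ((n−k)/n)·T_λ^↘(i,j). -/

import Mathlib

open scoped BigOperators

/-- The partition `(n−k,⋆)` of `n` (for `n−k ≥ 1`): `⌊n/(n−k)⌋` rows of size `n−k`,
followed (when `n−k` does not divide `n`) by a final row of size `n mod (n−k)`.
Cell `(i,j)` (0-indexed) belongs to the diagram iff `j < n−k` and `i(n−k)+j < n`. -/
def nkStar (n k : ℕ) : YoungDiagram where
  cells := (Finset.range n ×ˢ Finset.range n).filter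
      (fun c => c.2 < n - k ∧ c.1 * (n - k) + c.2 < n)
  isLowerSet := by
    rintro ⟨i₁, j₁⟩ ⟨i₂, j₂⟩ ⟨h1, h2⟩ hmem
    simp only [Finset.mem_coe, Finset.mem_filter, Finset.mem_product, Finset.mem_range]
      at hmem ⊢
    obtain ⟨⟨hi, hj⟩, hjk, hsum⟩ := hmem
    refine ⟨⟨lt_of_le_of_lt h1 hi, lt_of_le_of_lt h2 hj⟩, lt_of_le_of_lt h2 hjk, ?_⟩
    exact lt_of_le_of_lt (Nat.add_le_add (Nat.mul_le_mul h1 (le_refl (n - k))) h2) hsum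

/-- The diagonal-reading tableau `T_λ^↘`: entries `1,…,n` filled in increasing order of
the diagonal index `j−i`, each diagonal filled from top to bottom.  Explicitly,
`T_λ^↘(i,j) = #{(i',j')∈λ : j'−i' < j−i} + #{(i',j')∈λ : j'−i' = j−i ∧ i' ≤ i}`. -/
def diagTab (μ : YoungDiagram) : ℕ × ℕ → ℕ := fun c =>
  (μ.cells.filter (fun c' =>
      ((c'.2 : ℤ) - (c'.1 : ℤ) < (c.2 : ℤ) - (c.1 : ℤ)) ∨
        ((c'.2 : ℤ) - (c'.1 : ℤ) = (c.2 : ℤ) - (c.1 : ℤ) ∧ c'.1 ≤ c.1))).card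

/-- Counting a filter of a square product fiberwise, when each fiber is an initial range. -/
lemma card_filter_product_range (n : ℕ) (p : ℕ × ℕ → Prop) [DecidablePred p] (f : ℕ → ℕ)
    (h : ∀ a ∈ Finset.range n,
      (Finset.range n).filter (fun b => p (a, b)) = Finset.range (f a)) :
    ((Finset.range n ×ˢ Finset.range n).filter p).card = ∑ a ∈ Finset.range n, f a := by
  rw [Finset.card_filter, Finset.sum_product]
  refine Finset.sum_congr rfl fun a ha => ?_
  rw [← Finset.card_range (f a), ← h a ha, Finset.card_filter]

/-- Elementary arithmetic fact used per row. -/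
lemma row_arith (m L B e : ℕ) (hL : L ≤ m) (hem : e ≤ m) (heB : e ≤ B) :
    L * e ≤ m * min L B := by
  rcases le_total L B with h | h
  · rw [min_eq_left h, mul_comm m L]
    exact Nat.mul_le_mul_left L hem
  · rw [min_eq_right h]
    exact Nat.mul_le_mul hL heB

/-- The diagram `nkStar n k` has exactly `n` cells (when `k < n`). -/
lemma nkStar_card (n k : ℕ) (hk : k < n) : (nkStar n k).cells.card = n := by
  have hm0 : 0 < n - k := by omega
  have h : (nkStar n k).cells.card = (Finset.range n).card := by
    apply Finset.card_bij' (fun c _ => c.1 * (n - k) + c.2)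
        (fun x _ => (x / (n - k), x % (n - k)))
    · intro c hc
      simp only [nkStar, Finset.mem_filter, Finset.mem_product, Finset.mem_range] at hc
      simpa [Finset.mem_range] using hc.2.2
    · intro x hx
      simp only [Finset.mem_range] at hx
      have h1 : x % (n - k) < n - k := Nat.mod_lt _ hm0
      have h2 : x / (n - k) * (n - k) + x % (n - k) = x := by
        rw [mul_comm]; exact Nat.div_add_mod x (n - k)
      simp only [nkStar, Finset.mem_filter, Finset.mem_product, Finset.mem_range]
      have h3 : x / (n - k) ≤ x := Nat.div_le_self _ _
      refine ⟨⟨by omega, by omega⟩, h1, by omega⟩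
    · intro c hc
      simp only [nkStar, Finset.mem_filter, Finset.mem_product, Finset.mem_range] at hc
      obtain ⟨⟨hi, hj⟩, hjm, hs⟩ := hc
      have hdiv : (c.1 * (n - k) + c.2) / (n - k) = c.1 := by
        rw [add_comm, Nat.add_mul_div_right _ _ hm0, Nat.div_eq_of_lt hjm, zero_add]
      have hmod : (c.1 * (n - k) + c.2) % (n - k) = c.2 := by
        rw [mul_comm, Nat.mul_add_mod, Nat.mod_eq_of_lt hjm]
      exact Prod.ext hdiv hmod
    · intro x hx
      rw [mul_comm]; exact Nat.div_add_mod x (n - k)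
  rw [h, Finset.card_range]

/-- Key natural-number inequality: `n·(j−i+1) ≤ (n−k)·T`. -/
lemma key_nat (n k i j : ℕ) (hk1 : 1 ≤ k) (hk2 : k ≤ n - 2) (hij : i ≤ j)
    (hjm : j < n - k) (hin : i * (n - k) + j < n) :
    n * (j - i + 1) ≤ (n - k) * diagTab (nkStar n k) (i, j) := by
  have hn3 : 3 ≤ n := by omega
  have hm2 : 2 ≤ n - k := by omega
  have hmn : n - k ≤ n := by omega
  -- the per-row fiber of the length count
  have hrowlen : ∀ a : ℕ,
      (Finset.range n).filter (fun b => b < n - k ∧ a * (n - k) + b < n)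
        = Finset.range (min (n - k) (n - a * (n - k))) := by
    intro a
    ext b
    simp only [Finset.mem_filter, Finset.mem_range, lt_min_iff]
    generalize a * (n - k) = t
    omega
  -- the per-row fiber of the tableau count
  have hrowcnt : ∀ a : ℕ,
      (Finset.range n).filter (fun b => (b < n - k ∧ a * (n - k) + b < n) ∧
          (((b : ℤ) - (a : ℤ) < (j : ℤ) - (i : ℤ)) ∨
            ((b : ℤ) - (a : ℤ) = (j : ℤ) - (i : ℤ) ∧ a ≤ i)))
        = Finset.range (min (min (n - k) (n - a * (n - k)))
            (if a ≤ i then a + j - i + 1 else a + j - i)) := by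
    intro a
    ext b
    by_cases hai : a ≤ i
    · simp only [Finset.mem_filter, Finset.mem_range, lt_min_iff, hai, if_true, and_true]
      generalize a * (n - k) = t
      omega
    · simp only [Finset.mem_filter, Finset.mem_range, lt_min_iff, hai, if_false, and_false,
        or_false]
      generalize a * (n - k) = t
      omega
  -- `diagTab` as a sum over rows
  have hTcard : diagTab (nkStar n k) (i, j)
      = ((Finset.range n ×ˢ Finset.range n).filter (fun c : ℕ × ℕ =>
          (c.2 < n - k ∧ c.1 * (n - k) + c.2 < n) ∧
          (((c.2 : ℤ) - (c.1 : ℤ) < (j : ℤ) - (i : ℤ)) ∨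
            ((c.2 : ℤ) - (c.1 : ℤ) = (j : ℤ) - (i : ℤ) ∧ c.1 ≤ i)))).card := by
    simp [diagTab, nkStar, Finset.filter_filter]
  have hT : diagTab (nkStar n k) (i, j)
      = ∑ a ∈ Finset.range n, min (min (n - k) (n - a * (n - k)))
          (if a ≤ i then a + j - i + 1 else a + j - i) := by
    rw [hTcard]
    exact card_filter_product_range n _ _ (fun a _ => hrowcnt a)
  -- `n` as a sum of row lengths
  have hncard : ((Finset.range n ×ˢ Finset.range n).filter (fun c : ℕ × ℕ =>
      c.2 < n - k ∧ c.1 * (n - k) + c.2 < n)).card = n := nkStar_card n k (by omega)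
  have hsum : ((Finset.range n ×ˢ Finset.range n).filter (fun c : ℕ × ℕ =>
      c.2 < n - k ∧ c.1 * (n - k) + c.2 < n)).card
        = ∑ a ∈ Finset.range n, min (n - k) (n - a * (n - k)) :=
    card_filter_product_range n _ _ (fun a _ => hrowlen a)
  have hn : n = ∑ a ∈ Finset.range n, min (n - k) (n - a * (n - k)) :=
    hncard.symm.trans hsum
  rw [hT]
  calc n * (j - i + 1)
      = (∑ a ∈ Finset.range n, min (n - k) (n - a * (n - k))) * (j - i + 1) := by rw [← hn]
    _ = ∑ a ∈ Finset.range n, min (n - k) (n - a * (n - k)) * (j - i + 1) :=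
        Finset.sum_mul _ _ _
    _ ≤ ∑ a ∈ Finset.range n, (n - k) * min (min (n - k) (n - a * (n - k)))
          (if a ≤ i then a + j - i + 1 else a + j - i) := by
        refine Finset.sum_le_sum fun a _ => ?_
        refine row_arith (n - k) _ _ (j - i + 1) (min_le_left _ _) (by omega) ?_
        split <;> omega
    _ = (n - k) * ∑ a ∈ Finset.range n, min (min (n - k) (n - a * (n - k)))
          (if a ≤ i then a + j - i + 1 else a + j - i) := (Finset.mul_sum _ _ _).symm

theorem diagTab_box_bound (n k : ℕ) (hk1 : 1 ≤ k) (hk2 : k ≤ n - 2)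
    (c : ℕ × ℕ) (hc : c ∈ nkStar n k) :
    ((c.2 : ℝ) - (c.1 : ℝ) + 1) ≤
      (((n : ℝ) - (k : ℝ)) / (n : ℝ)) * ((diagTab (nkStar n k) c : ℕ) : ℝ) := by
  obtain ⟨i, j⟩ := c
  have hn3 : 3 ≤ n := by omega
  have hkn : k ≤ n := by omega
  have hc' : (i < n ∧ j < n) ∧ j < n - k ∧ i * (n - k) + j < n := by
    rw [← YoungDiagram.mem_cells] at hc
    simpa [nkStar] using hc
  have hn0 : (0 : ℝ) < (n : ℝ) := by exact_mod_cast (by omega : 0 < n)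
  rcases le_or_gt i j with hij | hij
  · have key := key_nat n k i j hk1 hk2 hij hc'.2.1 hc'.2.2
    have keyR : (n : ℝ) * ((j : ℝ) - (i : ℝ) + 1)
        ≤ ((n : ℝ) - (k : ℝ)) * (diagTab (nkStar n k) (i, j) : ℝ) := by
      have h := (Nat.cast_le (α := ℝ)).2 key
      push_cast [Nat.cast_sub hij, Nat.cast_sub hkn] at h
      linarith
    rw [div_mul_eq_mul_div, le_div_iff₀ hn0]
    nlinarith
  · have h1 : ((j : ℝ) - (i : ℝ) + 1) ≤ 0 := by
      have h : (j : ℝ) + 1 ≤ (i : ℝ) := by exact_mod_cast (by omega : j + 1 ≤ i)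
      linarith
    have h2 : (0 : ℝ) ≤ (((n : ℝ) - (k : ℝ)) / (n : ℝ)) * (diagTab (nkStar n k) (i, j) : ℝ) := by
      apply mul_nonneg
      · apply div_nonneg _ (le_of_lt hn0)
        have h : (k : ℝ) ≤ (n : ℝ) := by exact_mod_cast hkn
        linarith
      · positivity
    linarith
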